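/- Let a, b, c : ℝ² → ℝ be continuously differentiable with b never zero, satisfying a_t = b_x, b_t = c_x and c_t = ((c²-1)/b)_x. Then R⁺ = (c+1)/b satisfies R⁺_t = ((c-1)/b)·R⁺_x, and R⁻ = (c-1)/b satisfies R⁻_t = ((c+1)/b)·R⁻_x. -/

import Mathlib

theorem riemann_invariants_eq5 (a b c : ℝ × ℝ → ℝ)
    (ha : ContDiff ℝ 1 a) (hb : ContDiff ℝ 1 b) (hc : ContDiff ℝ 1 c)
    (hb0 : ∀ p, b p ≠ 0)
    (hsys1 : ∀ p, fderiv ℝ a p (0, 1) = fderiv ℝ b p (1, 0))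
    (hsys2 : ∀ p, fderiv ℝ b p (0, 1) = fderiv ℝ c p (1, 0))
    (hsys3 : ∀ p, fderiv ℝ c p (0, 1) =
        fderiv ℝ (fun q => (c q ^ 2 - 1) / b q) p (1, 0)) :
    (∀ p, fderiv ℝ (fun q => (c q + 1) / b q) p (0, 1) =
        ((c p - 1) / b p) * fderiv ℝ (fun q => (c q + 1) / b q) p (1, 0)) ∧
    (∀ p, fderiv ℝ (fun q => (c q - 1) / b q) p (0, 1) =
        ((c p + 1) / b p) * fderiv ℝ (fun q => (c q - 1) / b q) p (1, 0)) := by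
  have hbd : ∀ p, DifferentiableAt ℝ b p := fun p => (hb.differentiable one_ne_zero).differentiableAt
  have hcd : ∀ p, DifferentiableAt ℝ c p := fun p => (hc.differentiable one_ne_zero).differentiableAt
  -- 1-D derivative of g along the line t ↦ p + t • v
  have hline : ∀ (p v : ℝ × ℝ), HasDerivAt (fun t : ℝ => p + t • v) v 0 := by
    intro p v
    simpa using ((hasDerivAt_id (0 : ℝ)).smul_const v).const_add p
  have hcomp : ∀ (g : ℝ × ℝ → ℝ) (p v : ℝ × ℝ), DifferentiableAt ℝ g p →
      HasDerivAt (fun t : ℝ => g (p + t • v)) (fderiv ℝ g p v) 0 := by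
    intro g p v hg
    have h0 : HasFDerivAt g (fderiv ℝ g p) (p + (0 : ℝ) • v) := by
      simpa using hg.hasFDerivAt
    exact h0.comp_hasDerivAt 0 (hline p v)
  -- quotient rule for directional derivatives
  have hdiv : ∀ (f : ℝ × ℝ → ℝ) (p v : ℝ × ℝ), DifferentiableAt ℝ f p →
      fderiv ℝ (fun q => f q / b q) p v =
        fderiv ℝ f p v / b p - f p / b p ^ 2 * fderiv ℝ b p v := by
    intro f p v hf
    have hF := hcomp f p v hf
    have hB := hcomp b p v (hbd p)
    have hQ := hF.div hB (by simpa using hb0 p)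
    have hfq : DifferentiableAt ℝ (fun q => f q / b q) p := by
      simp only [div_eq_mul_inv]
      exact hf.mul ((hbd p).inv (hb0 p))
    have hQ' := hcomp (fun q => f q / b q) p v hfq
    have := hQ.unique hQ'
    rw [← this]
    simp only [zero_smul, add_zero]
    field_simp [hb0 p]
  have hsq : ∀ (p v : ℝ × ℝ), fderiv ℝ (fun q => c q ^ 2 - 1) p v =
      2 * c p * fderiv ℝ c p v := by
    intro p v
    have hF := ((hcomp c p v (hcd p)).pow 2).sub_const 1
    have hQ' := hcomp (fun q => c q ^ 2 - 1) p v (((hcd p).pow 2).sub_const 1)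
    have := hF.unique (by simpa using hQ')
    rw [← this]
    simp only [zero_smul, add_zero]
    ring
  have key : ∀ (p : ℝ × ℝ) (s : ℝ), s ^ 2 = 1 →
      fderiv ℝ (fun q => (c q + s) / b q) p (0, 1) =
        ((c p - s) / b p) * fderiv ℝ (fun q => (c q + s) / b q) p (1, 0) := by
    intro p s hs
    have hct := hsys3 p
    rw [hdiv (fun q => c q ^ 2 - 1) p (1, 0) (((hcd p).pow 2).sub_const 1), hsq] at hct
    have hbt := hsys2 p
    rw [hdiv _ p (0, 1) ((hcd p).add_const s), hdiv _ p (1, 0) ((hcd p).add_const s),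
      fderiv_add_const, hct, hbt]
    have hb' := hb0 p
    field_simp
    linear_combination (-(fderiv ℝ b p (1, 0))) * hs
  refine ⟨fun p => key p 1 (by norm_num), fun p => ?_⟩
  have := key p (-1) (by norm_num)
  simpa [sub_eq_add_neg] using this
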